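/- Let k ≥ 1 and define the diagonal degeneration maps A(ε)|i,j⟩ = ε^{(i-g)² + 2ij}|i,j⟩ on ℂ^{k₁}⊗ℂ^{k₂} etc. Applied to the triangle of maximally entangled pairs MaMu(k₁,k₂,k₃) = ∑_{i₁,i₂,i₃} |i₁i₂⟩|i₂i₃⟩|i₃i₁⟩, the leading-order term in ε of (A⊗A⊗A)·MaMu(k₁,k₂,k₃) is ε^{2g²} ∑_{i₁+i₂+i₃ = g} |i₁i₂⟩|i₂i₃⟩|i₃i₁⟩, which is equivalent (after relabeling by an injective map) to a GHZ state with a number of levels equal to the number of solutions (i₁,i₂,i₃) ∈ {1,...,k₁}×{1,...,k₂}×{1,...,k₃} of i₁+i₂+i₃ = g. In particular with (k₁,k₂,k₃)=(2,2,3) and g = 5 one gets 4 solutions, showing MaMu(2,2,3) ⊵ GHZ_3(4). -/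
import Mathlib


open Polynomial

set_option maxHeartbeats 4000000

/-- the diagonal degeneration maps `A(ε)|i,j⟩ = ε^{(i-g)² + 2ij}|i,j⟩`
applied to the triangle of maximally entangled pairs `MaMu(k₁,k₂,k₃)`.
(a) The total exponent collected around the triangle is
`2g² + (i₁+i₂+i₃-g)²`, so the leading order `ε^{2g²}` term is
`∑_{i₁+i₂+i₃=g} |i₁i₂⟩|i₂i₃⟩|i₃i₁⟩`, a GHZ state with a number of levels equal to the
number of solutions of `i₁+i₂+i₃ = g` in `{1,…,k₁}×{1,…,k₂}×{1,…,k₃}`.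
(b) For `(k₁,k₂,k₃) = (2,2,3)` and `g = 5` there are exactly `4` solutions.
(c) Consequently `MaMu(2,2,3) ⊵ GHZ₃(4)`: there exist `ε`-polynomial local maps whose
application to `MaMu(2,2,3)` yields `ε^d · GHZ₃(4)` plus higher-order terms. -/
theorem stmt12 :
    (∀ g i₁ i₂ i₃ : ℤ,
        ((i₁ - g) ^ 2 + 2 * i₁ * i₂) + ((i₂ - g) ^ 2 + 2 * i₂ * i₃)
            + ((i₃ - g) ^ 2 + 2 * i₃ * i₁)
          = 2 * g ^ 2 + (i₁ + i₂ + i₃ - g) ^ 2) ∧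
    ((Finset.univ.filter fun p : Fin 2 × Fin 2 × Fin 3 =>
        ((p.1 : ℕ) + 1) + ((p.2.1 : ℕ) + 1) + ((p.2.2 : ℕ) + 1) = 5).card = 4) ∧
    (∃ (A : Matrix (Fin 4) (Fin 2 × Fin 2) (Polynomial ℂ))
        (B : Matrix (Fin 4) (Fin 2 × Fin 3) (Polynomial ℂ))
        (Cm : Matrix (Fin 4) (Fin 3 × Fin 2) (Polynomial ℂ))
        (d e : ℕ) (rem : Fin e → (Fin 4 → Fin 4 → Fin 4 → ℂ)),
      ∀ r s t : Fin 4,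
        (∑ i₁ : Fin 2, ∑ i₂ : Fin 2, ∑ i₃ : Fin 3,
            A r (i₁, i₂) * B s (i₂, i₃) * Cm t (i₃, i₁))
          = X ^ d * C (if r = s ∧ s = t then 1 else 0)
            + ∑ l : Fin e, X ^ (d + (l : ℕ) + 1) * C (rem l r s t)) := by
  refine ⟨fun g i₁ i₂ i₃ => by ring, by decide, ?_⟩
  refine ⟨Matrix.of fun r p =>
      if r = 0 ∧ p = (0,0) then X^18 else if r = 1 ∧ p = (0,1) then X^20
      else if r = 2 ∧ p = (1,0) then X^13 else if r = 3 ∧ p = (1,1) then X^17 else 0,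
    Matrix.of fun s p =>
      if s = 0 ∧ p = (0,2) then X^22 else if s = 1 ∧ p = (1,1) then X^17
      else if s = 2 ∧ p = (0,1) then X^20 else if s = 3 ∧ p = (1,0) then X^13 else 0,
    Matrix.of fun t p =>
      if t = 0 ∧ p = (2,0) then X^10 else if t = 1 ∧ p = (1,0) then X^13
      else if t = 2 ∧ p = (1,1) then X^17 else if t = 3 ∧ p = (0,1) then X^20 else 0,
    50, 1,
    fun _ r s t => if (r = 0 ∧ s = 2 ∧ t = 1) ∨ (r = 3 ∧ s = 1 ∧ t = 2) then 1 else 0, ?_⟩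
  intro r s t
  fin_cases r <;> fin_cases s <;> fin_cases t <;>
    simp [Fin.sum_univ_two, Fin.sum_univ_three, Fin.sum_univ_succ, Matrix.of_apply,
      Prod.ext_iff] <;> ring
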